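/- Let m_0 ≥ 5 be an odd integer. Then the set G = { x_1^{(m_0+1)/2} − x_0^2·x_2^{(m_0−1)/2} , x_1·x_2 − x_0^2 , x_2^{(m_0+1)/2} − x_1^{(m_0−1)/2} } is the reduced Gröbner basis of the toric ideal P of the sequence (m_0, m_0+1, m_0−1) with respect to the grevlex order with grading wt(x_i) = m_i and x_0 < x_1 < x_2: G is a Gröbner basis of P, every element of G has leading coefficient 1 (the leading monomials being x_1^{(m_0+1)/2}, x_1·x_2 and x_2^{(m_0+1)/2} respectively), and no monomial appearing in any element of G is divisible by the leading monomial of a different element of G. -/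

import Mathlib

open MvPolynomial

noncomputable section

/-- The weight of an exponent vector under the grading `wt (x i) = m i`. -/
def wt3 (m : Fin 3 → ℕ) (a : Fin 3 →₀ ℕ) : ℕ := ∑ i : Fin 3, m i * a i

/-- Grevlex with grading `wt (x i) = m i` and `x_0 < x_1 < x_2` :  `x^a > x^b` iff the weight
of `a` is bigger, or the weights agree and the leftmost nonzero entry of `a - b` is
negative. -/
def GrevGt3 (m : Fin 3 → ℕ) (a b : Fin 3 →₀ ℕ) : Prop :=
  wt3 m b < wt3 m a ∨
    (wt3 m a = wt3 m b ∧ ∃ i : Fin 3, a i < b i ∧ ∀ j : Fin 3, j < i → a j = b j)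

variable {K : Type*} [Field K]

/-- `d` is the exponent vector of the leading monomial of `f` w.r.t. the order `gt`. -/
def IsLM3 (gt : (Fin 3 →₀ ℕ) → (Fin 3 →₀ ℕ) → Prop)
    (f : MvPolynomial (Fin 3) K) (d : Fin 3 →₀ ℕ) : Prop :=
  d ∈ f.support ∧ ∀ e ∈ f.support, e ≠ d → gt d e

/-- `G` is a Gröbner basis of `P` with respect to the monomial order `gt`. -/
def IsGB3 (gt : (Fin 3 →₀ ℕ) → (Fin 3 →₀ ℕ) → Prop)
    (P : Ideal (MvPolynomial (Fin 3) K)) (G : Set (MvPolynomial (Fin 3) K)) : Prop :=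
  G ⊆ (P : Set (MvPolynomial (Fin 3) K)) ∧ (∀ g ∈ G, g ≠ 0) ∧
    ∀ f ∈ P, f ≠ 0 → ∃ g ∈ G, ∃ dg df, IsLM3 gt g dg ∧ IsLM3 gt f df ∧ dg ≤ df

/- ---------------- Auxiliary lemmas ---------------- -/

lemma fin3_lt_elim {Q : Fin 3 → Prop} (i : Fin 3)
    (h0 : i = 1 ∨ i = 2 → Q 0) (h1 : i = 2 → Q 1) : ∀ j : Fin 3, j < i → Q j := by
  intro j hj
  fin_cases i <;> fin_cases j <;> first
    | exact absurd hj (by decide)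
    | exact h0 (by simp)
    | exact h1 (by simp)

lemma grevgt3_total (m : Fin 3 → ℕ) (a b : Fin 3 →₀ ℕ) (h : a ≠ b) :
    GrevGt3 m a b ∨ GrevGt3 m b a := by
  rcases lt_trichotomy (wt3 m a) (wt3 m b) with h1 | h1 | h1
  · exact Or.inr (Or.inl h1)
  · rcases lt_trichotomy (a 0) (b 0) with h0 | h0 | h0
    · exact Or.inl (Or.inr ⟨h1, 0, h0, fin3_lt_elim 0 (by simp) (by simp)⟩)
    · rcases lt_trichotomy (a 1) (b 1) with h2 | h2 | h2
      · exact Or.inl (Or.inr ⟨h1, 1, h2, fin3_lt_elim 1 (fun _ => h0) (by simp)⟩)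
      · rcases lt_trichotomy (a 2) (b 2) with h3 | h3 | h3
        · exact Or.inl (Or.inr ⟨h1, 2, h3, fin3_lt_elim 2 (fun _ => h0) (fun _ => h2)⟩)
        · exact absurd (Finsupp.ext fun i => by fin_cases i <;> assumption) h
        · exact Or.inr (Or.inr ⟨h1.symm, 2, h3, fin3_lt_elim 2 (fun _ => h0.symm) (fun _ => h2.symm)⟩)
      · exact Or.inr (Or.inr ⟨h1.symm, 1, h2, fin3_lt_elim 1 (fun _ => h0.symm) (by simp)⟩)
    · exact Or.inr (Or.inr ⟨h1.symm, 0, h0, fin3_lt_elim 0 (by simp) (by simp)⟩)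
  · exact Or.inl (Or.inl h1)

lemma grevgt3_asymm (m : Fin 3 → ℕ) {a b : Fin 3 →₀ ℕ}
    (hab : GrevGt3 m a b) (hba : GrevGt3 m b a) : False := by
  rcases hab with h | ⟨hw, i, hi, hpre⟩
  · rcases hba with h' | ⟨hw', _⟩ <;> omega
  · rcases hba with h' | ⟨hw', i', hi', hpre'⟩
    · omega
    · rcases lt_trichotomy i i' with hii | hii | hii
      · exact absurd (hpre' i hii) (by omega)
      · subst hii; omega
      · exact absurd (hpre i' hii) (by omega)

lemma grevgt3_trans (m : Fin 3 → ℕ) {a b c : Fin 3 →₀ ℕ}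
    (hab : GrevGt3 m a b) (hbc : GrevGt3 m b c) : GrevGt3 m a c := by
  rcases hab with h | ⟨hw, i, hi, hpre⟩
  · rcases hbc with h' | ⟨hw', _⟩
    · exact Or.inl (lt_trans h' h)
    · exact Or.inl (hw' ▸ h)
  · rcases hbc with h' | ⟨hw', i', hi', hpre'⟩
    · exact Or.inl (hw ▸ h')
    · refine Or.inr ⟨hw.trans hw', ?_⟩
      rcases lt_trichotomy i i' with hii | hii | hii
      · exact ⟨i, by rw [← hpre' i hii]; exact hi, fun j hj => (hpre j hj).trans (hpre' j (hj.trans hii))⟩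
      · subst hii; exact ⟨i, hi.trans hi', fun j hj => (hpre j hj).trans (hpre' j hj)⟩
      · exact ⟨i', by rw [hpre i' hii]; exact hi', fun j hj => (hpre j (hj.trans hii)).trans (hpre' j hj)⟩

lemma exists_max3 (m : Fin 3 → ℕ) (s : Finset (Fin 3 →₀ ℕ)) (hs : s.Nonempty) :
    ∃ d ∈ s, ∀ e ∈ s, e ≠ d → GrevGt3 m d e := by
  classical
  induction s using Finset.induction with
  | empty => exact absurd hs (by simp)
  | @insert a s ha ih =>
    by_cases hs' : s.Nonempty
    · obtain ⟨d, hd, hmax⟩ := ih hs'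
      have had : a ≠ d := fun h => ha (h ▸ hd)
      rcases grevgt3_total m a d had with h | h
      · refine ⟨a, Finset.mem_insert_self _ _, fun e he hne => ?_⟩
        rcases Finset.mem_insert.mp he with rfl | he'
        · exact absurd rfl hne
        · rcases eq_or_ne e d with rfl | hed
          · exact h
          · exact grevgt3_trans m h (hmax e he' hed)
      · refine ⟨d, Finset.mem_insert_of_mem hd, fun e he hne => ?_⟩
        rcases Finset.mem_insert.mp he with rfl | he'
        · exact h
        · exact hmax e he' hne
    · rw [Finset.not_nonempty_iff_eq_empty] at hs'
      subst hs'
      refine ⟨a, Finset.mem_insert_self _ _, fun e he hne => ?_⟩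
      rcases Finset.mem_insert.mp he with rfl | h
      · exact absurd rfl hne
      · simp at h

lemma isLM3_unique {m : Fin 3 → ℕ} {f : MvPolynomial (Fin 3) K} {d d' : Fin 3 →₀ ℕ}
    (h : IsLM3 (GrevGt3 m) f d) (h' : IsLM3 (GrevGt3 m) f d') : d = d' := by
  by_contra hne
  exact grevgt3_asymm m (h.2 d' h'.1 (Ne.symm hne)) (h'.2 d h.1 hne)

lemma int_pos_factor {c t : ℤ} (hc : 0 < c) (h : 1 ≤ c * t) : 1 ≤ t := by
  by_contra h'
  push_neg at h'
  have : c * t ≤ 0 := mul_nonpos_of_nonneg_of_nonpos hc.le (by omega)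
  omega

lemma int_ge_of_mul {c t : ℤ} (hc : 0 < c) (h : 1 ≤ c * t) : c ≤ c * t := by
  have ht : 1 ≤ t := int_pos_factor hc h
  nlinarith

lemma wt3_eval (r : ℕ) (a : Fin 3 →₀ ℕ) :
    wt3 ![2*r+1, 2*r+2, 2*r] a = (2*r+1) * a 0 + (2*r+2) * a 1 + (2*r) * a 2 := by
  simp [wt3, Fin.sum_univ_three]

set_option maxHeartbeats 1000000 in
lemma key_arith (r : ℕ) (hr : 2 ≤ r) (a b : Fin 3 →₀ ℕ)
    (ha1 : a 1 ≤ r) (ha2 : a 2 ≤ r) (ha12 : a 1 = 0 ∨ a 2 = 0)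
    (hw : wt3 ![2*r+1, 2*r+2, 2*r] a = wt3 ![2*r+1, 2*r+2, 2*r] b)
    (hne : a ≠ b) : GrevGt3 ![2*r+1, 2*r+2, 2*r] b a := by
  have hwe : (2*r+1) * a 0 + (2*r+2) * a 1 + (2*r) * a 2
      = (2*r+1) * b 0 + (2*r+2) * b 1 + (2*r) * b 2 := by
    rw [← wt3_eval, ← wt3_eval]; exact hw
  have hr' : (2 : ℤ) ≤ (r : ℤ) := by exact_mod_cast hr
  have hZ : (2*(r:ℤ)+1) * (a 0 : ℤ) + (2*(r:ℤ)+2) * (a 1 : ℤ) + (2*(r:ℤ)) * (a 2 : ℤ)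
      = (2*(r:ℤ)+1) * (b 0 : ℤ) + (2*(r:ℤ)+2) * (b 1 : ℤ) + (2*(r:ℤ)) * (b 2 : ℤ) := by
    exact_mod_cast hwe
  have hA1 : (a 1 : ℤ) ≤ (r : ℤ) := by exact_mod_cast ha1
  have hA2 : (a 2 : ℤ) ≤ (r : ℤ) := by exact_mod_cast ha2
  have hA0n : (0:ℤ) ≤ (a 0 : ℤ) := Int.natCast_nonneg _
  have hA1n : (0:ℤ) ≤ (a 1 : ℤ) := Int.natCast_nonneg _
  have hA2n : (0:ℤ) ≤ (a 2 : ℤ) := Int.natCast_nonneg _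
  have hB0n : (0:ℤ) ≤ (b 0 : ℤ) := Int.natCast_nonneg _
  have hB1n : (0:ℤ) ≤ (b 1 : ℤ) := Int.natCast_nonneg _
  have hB2n : (0:ℤ) ≤ (b 2 : ℤ) := Int.natCast_nonneg _
  have H : b 0 < a 0 ∨ (b 0 = a 0 ∧ b 1 < a 1) ∨ (b 0 = a 0 ∧ b 1 = a 1 ∧ b 2 < a 2) := by
    by_contra hcon
    push_neg at hcon
    obtain ⟨hc0, hc1, hc2⟩ := hcon
    rcases lt_or_eq_of_le hc0 with h0 | h0
    · -- a 0 < b 0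
      have hd : (a 0 : ℤ) + 1 ≤ (b 0 : ℤ) := by exact_mod_cast h0
      rcases ha12 with h12 | h12
      · -- a 1 = 0
        have hA1z : (a 1 : ℤ) = 0 := by exact_mod_cast h12
        have h1 : (2*(r:ℤ)+1) ≤ 2*(r:ℤ)*((a 2 : ℤ) - (b 2 : ℤ)) := by
          nlinarith [mul_le_mul_of_nonneg_left hd (show (0:ℤ) ≤ 2*(r:ℤ)+1 by linarith),
            mul_nonneg (show (0:ℤ) ≤ 2*(r:ℤ)+2 by linarith) hB1n]
        have h2 : (1:ℤ) ≤ (a 2 : ℤ) - (b 2 : ℤ) :=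
          int_pos_factor (show (0:ℤ) < 2*(r:ℤ) by linarith) (by linarith)
        have hs : -(b 1 : ℤ) - ((a 2 : ℤ) - (b 2 : ℤ))
            = (2*(r:ℤ)+1) * (((b 0:ℤ)+(b 1:ℤ)+(b 2:ℤ)) - ((a 0:ℤ)+(a 1:ℤ)+(a 2:ℤ))) := by
          linarith [hZ, hA1z]
        have hs1 : (1:ℤ) ≤ (2*(r:ℤ)+1) * (((a 0:ℤ)+(a 1:ℤ)+(a 2:ℤ)) - ((b 0:ℤ)+(b 1:ℤ)+(b 2:ℤ))) := by
          linarith [hs, h2]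
        have hs2 : (2*(r:ℤ)+1) ≤ (2*(r:ℤ)+1) * (((a 0:ℤ)+(a 1:ℤ)+(a 2:ℤ)) - ((b 0:ℤ)+(b 1:ℤ)+(b 2:ℤ))) :=
          int_ge_of_mul (by linarith) hs1
        have hB1 : (r:ℤ) + 1 ≤ (b 1 : ℤ) := by linarith [hs, hs2, hA2, hB2n]
        nlinarith [mul_le_mul_of_nonneg_left hd (show (0:ℤ) ≤ 2*(r:ℤ)+1 by linarith),
          mul_le_mul_of_nonneg_left hB1 (show (0:ℤ) ≤ 2*(r:ℤ)+2 by linarith),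
          mul_le_mul_of_nonneg_left hA2 (show (0:ℤ) ≤ 2*(r:ℤ) by linarith),
          mul_nonneg (show (0:ℤ) ≤ 2*(r:ℤ) by linarith) hB2n, hZ, hA1z, hr']
      · -- a 2 = 0
        have hA2z : (a 2 : ℤ) = 0 := by exact_mod_cast h12
        have h1 : (2*(r:ℤ)+1) ≤ (2*(r:ℤ)+2)*((a 1 : ℤ) - (b 1 : ℤ)) := by
          nlinarith [mul_le_mul_of_nonneg_left hd (show (0:ℤ) ≤ 2*(r:ℤ)+1 by linarith),
            mul_nonneg (show (0:ℤ) ≤ 2*(r:ℤ) by linarith) hB2n]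
        have h2 : (1:ℤ) ≤ (a 1 : ℤ) - (b 1 : ℤ) :=
          int_pos_factor (show (0:ℤ) < 2*(r:ℤ)+2 by linarith) (by linarith)
        have hs : ((a 1 : ℤ) - (b 1 : ℤ)) + (b 2 : ℤ)
            = (2*(r:ℤ)+1) * (((b 0:ℤ)+(b 1:ℤ)+(b 2:ℤ)) - ((a 0:ℤ)+(a 1:ℤ)+(a 2:ℤ))) := by
          linarith [hZ, hA2z]
        have hs1 : (1:ℤ) ≤ (2*(r:ℤ)+1) * (((b 0:ℤ)+(b 1:ℤ)+(b 2:ℤ)) - ((a 0:ℤ)+(a 1:ℤ)+(a 2:ℤ))) := by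
          linarith [hs, h2]
        have hs2 : (2*(r:ℤ)+1) ≤ (2*(r:ℤ)+1) * (((b 0:ℤ)+(b 1:ℤ)+(b 2:ℤ)) - ((a 0:ℤ)+(a 1:ℤ)+(a 2:ℤ))) :=
          int_ge_of_mul (by linarith) hs1
        have hB2 : (r:ℤ) + 1 ≤ (b 2 : ℤ) := by linarith [hs, hs2, hA1, hB1n]
        nlinarith [mul_le_mul_of_nonneg_left hd (show (0:ℤ) ≤ 2*(r:ℤ)+1 by linarith),
          mul_le_mul_of_nonneg_left hB2 (show (0:ℤ) ≤ 2*(r:ℤ) by linarith),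
          mul_le_mul_of_nonneg_left hA1 (show (0:ℤ) ≤ 2*(r:ℤ)+2 by linarith),
          mul_nonneg (show (0:ℤ) ≤ 2*(r:ℤ)+2 by linarith) hB1n, hZ, hA2z, hr']
    · -- a 0 = b 0
      have h0' : b 0 = a 0 := h0.symm
      have hA0B0 : (a 0 : ℤ) = (b 0 : ℤ) := by exact_mod_cast h0
      have hc1' := hc1 h0'
      rcases lt_or_eq_of_le hc1' with h1 | h1
      · -- a 1 < b 1
        have hd : (a 1 : ℤ) + 1 ≤ (b 1 : ℤ) := by exact_mod_cast h1
        have hA0B0r : (r:ℤ)*(a 0 : ℤ) = (r:ℤ)*(b 0 : ℤ) := by rw [hA0B0]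
        have hp : (2*(r:ℤ)+2) ≤ (2*(r:ℤ))*((a 2 : ℤ) - (b 2 : ℤ)) := by
          nlinarith [mul_le_mul_of_nonneg_left hd (show (0:ℤ) ≤ 2*(r:ℤ)+2 by linarith), hZ, hA0B0, hA0B0r]
        have h2 : (1:ℤ) ≤ (a 2 : ℤ) - (b 2 : ℤ) :=
          int_pos_factor (show (0:ℤ) < 2*(r:ℤ) by linarith) (by linarith)
        have hdvd : (a 2 : ℤ) - (b 2 : ℤ)
            = ((r:ℤ)+1) * (((a 2:ℤ) - (b 2:ℤ)) - ((b 1:ℤ) - (a 1:ℤ))) := by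
          linarith [hZ, hA0B0, hA0B0r]
        have h3 : ((r:ℤ)+1) ≤ ((r:ℤ)+1) * (((a 2:ℤ) - (b 2:ℤ)) - ((b 1:ℤ) - (a 1:ℤ))) :=
          int_ge_of_mul (by linarith) (by linarith [hdvd, h2])
        linarith [hdvd, h3, hA2, hB2n]
      · -- a 1 = b 1
        have hA1B1 : (a 1 : ℤ) = (b 1 : ℤ) := by exact_mod_cast h1
        have hA0B0r : (r:ℤ)*(a 0 : ℤ) = (r:ℤ)*(b 0 : ℤ) := by rw [hA0B0]
        have hA1B1r : (r:ℤ)*(a 1 : ℤ) = (r:ℤ)*(b 1 : ℤ) := by rw [hA1B1]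
        have hA2B2 : (a 2 : ℤ) = (b 2 : ℤ) := by nlinarith [hZ, hA0B0, hA1B1, hA0B0r, hA1B1r, hr']
        have h22 : a 2 = b 2 := by exact_mod_cast hA2B2
        exact hne (Finsupp.ext fun i => by fin_cases i <;> [exact h0; exact h1; exact h22])
  refine Or.inr ⟨hw.symm, ?_⟩
  rcases H with h | ⟨h0, h1⟩ | ⟨h0, h1, h2⟩
  · exact ⟨0, h, fin3_lt_elim 0 (by simp) (by simp)⟩
  · exact ⟨1, h1, fin3_lt_elim 1 (fun _ => h0) (by simp)⟩
  · exact ⟨2, h2, fin3_lt_elim 2 (fun _ => h0) (fun _ => h1)⟩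

lemma aeval_expand (m : Fin 3 → ℕ) (f : MvPolynomial (Fin 3) K) :
    (aeval (fun i : Fin 3 => (Polynomial.X : Polynomial K) ^ m i)) f
      = ∑ a ∈ f.support, Polynomial.C (coeff a f) * Polynomial.X ^ (wt3 m a) := by
  conv_lhs => rw [f.as_sum, map_sum]
  refine Finset.sum_congr rfl fun a _ => ?_
  rw [aeval_monomial, Polynomial.algebraMap_eq]
  congr 1
  rw [Finsupp.prod_pow]
  have : ∀ n : Fin 3, ((Polynomial.X : Polynomial K) ^ m n) ^ a n
      = (Polynomial.X : Polynomial K) ^ (m n * a n) := fun n => by rw [← pow_mul]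
  rw [Finset.prod_congr rfl (fun n _ => this n), Finset.prod_pow_eq_pow_sum]
  rfl

lemma toric_two_terms (m : Fin 3 → ℕ) (f : MvPolynomial (Fin 3) K)
    (hf : (aeval (fun i : Fin 3 => (Polynomial.X : Polynomial K) ^ m i)) f = 0)
    (d : Fin 3 →₀ ℕ) (hd : d ∈ f.support) :
    ∃ e ∈ f.support, e ≠ d ∧ wt3 m e = wt3 m d := by
  by_contra hcon
  push_neg at hcon
  have h0 := congrArg (fun p => Polynomial.coeff p (wt3 m d)) (aeval_expand m f ▸ hf)
  simp only [Polynomial.finset_sum_coeff, Polynomial.coeff_C_mul, Polynomial.coeff_X_pow,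
    Polynomial.coeff_zero] at h0
  rw [Finset.sum_eq_single d (fun e he hne => by
      rw [if_neg (fun h : wt3 m d = wt3 m e => (hcon e he hne) h.symm), mul_zero])
    (fun h => absurd hd h)] at h0
  rw [if_pos rfl, mul_one] at h0
  exact (mem_support_iff.mp hd) h0

lemma binom_support (d1 d2 : Fin 3 →₀ ℕ) (h : d1 ≠ d2) :
    ((monomial d1 (1:K)) - monomial d2 1).support = {d1, d2} := by
  ext e
  simp only [Finset.mem_insert, Finset.mem_singleton, mem_support_iff]
  rw [sub_eq_add_neg, coeff_add, coeff_neg, coeff_monomial, coeff_monomial]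
  rcases eq_or_ne d1 e with rfl | h1
  · rw [if_pos rfl, if_neg (Ne.symm h)]
    · simp
  · rw [if_neg h1]
    rcases eq_or_ne d2 e with rfl | h2
    · simp
    · simp [h2, h1.symm, Ne.symm h2]

lemma binom_coeff1 (d1 d2 : Fin 3 →₀ ℕ) (h : d1 ≠ d2) :
    coeff d1 ((monomial d1 (1:K)) - monomial d2 1) = 1 := by
  rw [sub_eq_add_neg, coeff_add, coeff_neg, coeff_monomial, coeff_monomial,
    if_pos rfl, if_neg (Ne.symm h)]
  simp

/- representations of the three binomials -/

lemma g1_rep (r : ℕ) : (X 1 ^ (r+1) - X 0^2 * X 2^r : MvPolynomial (Fin 3) K)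
    = monomial (Finsupp.single 1 (r+1)) 1 - monomial (Finsupp.single 0 2 + Finsupp.single 2 r) 1 := by
  rw [X_pow_eq_monomial, X_pow_eq_monomial, X_pow_eq_monomial, monomial_mul, one_mul]

lemma g2_rep : (X 1 * X 2 - X 0^2 : MvPolynomial (Fin 3) K)
    = monomial (Finsupp.single 1 1 + Finsupp.single 2 1) 1 - monomial (Finsupp.single 0 2) 1 := by
  rw [← pow_one (X 1), ← pow_one (X 2), X_pow_eq_monomial, X_pow_eq_monomial,
    X_pow_eq_monomial, monomial_mul, one_mul]

lemma g3_rep (r : ℕ) : (X 2 ^ (r+1) - X 1^r : MvPolynomial (Fin 3) K)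
    = monomial (Finsupp.single 2 (r+1)) 1 - monomial (Finsupp.single 1 r) 1 := by
  rw [X_pow_eq_monomial, X_pow_eq_monomial]

lemma d1_ne (r : ℕ) : (Finsupp.single (1:Fin 3) (r+1) : Fin 3 →₀ ℕ)
    ≠ Finsupp.single 0 2 + Finsupp.single 2 r := by
  intro h
  have := DFunLike.congr_fun h 1
  simp at this

lemma d2_ne : (Finsupp.single (1:Fin 3) 1 + Finsupp.single 2 1 : Fin 3 →₀ ℕ)
    ≠ Finsupp.single 0 2 := by
  intro h
  have := DFunLike.congr_fun h 1
  simp at this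

lemma d3_ne (r : ℕ) : (Finsupp.single (2:Fin 3) (r+1) : Fin 3 →₀ ℕ)
    ≠ Finsupp.single 1 r := by
  intro h
  have := DFunLike.congr_fun h 2
  simp at this

lemma g1_support (r : ℕ) : (X 1 ^ (r+1) - X 0^2 * X 2^r : MvPolynomial (Fin 3) K).support
    = {Finsupp.single 1 (r+1), Finsupp.single 0 2 + Finsupp.single 2 r} := by
  rw [g1_rep]; exact binom_support _ _ (d1_ne r)

lemma g2_support : (X 1 * X 2 - X 0^2 : MvPolynomial (Fin 3) K).support
    = {Finsupp.single 1 1 + Finsupp.single 2 1, Finsupp.single 0 2} := by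
  rw [g2_rep]; exact binom_support _ _ d2_ne

lemma g3_support (r : ℕ) : (X 2 ^ (r+1) - X 1^r : MvPolynomial (Fin 3) K).support
    = {Finsupp.single 2 (r+1), Finsupp.single 1 r} := by
  rw [g3_rep]; exact binom_support _ _ (d3_ne r)

lemma lm_g1 (r : ℕ) :
    IsLM3 (GrevGt3 ![2*r+1, 2*r+2, 2*r])
      (X 1 ^ (r+1) - X 0^2 * X 2^r : MvPolynomial (Fin 3) K) (Finsupp.single 1 (r+1)) := by
  refine ⟨by rw [g1_support]; simp, fun e he hne => ?_⟩
  rw [g1_support] at he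
  have he2 : e = Finsupp.single 0 2 + Finsupp.single 2 r := by
    rcases Finset.mem_insert.mp he with h | h
    · exact absurd h hne
    · exact Finset.mem_singleton.mp h
  subst he2
  refine Or.inr ⟨?_, 0, ?_, fin3_lt_elim 0 (by simp) (by simp)⟩
  · rw [wt3_eval, wt3_eval]; simp; ring
  · simp

lemma lm_g2 (r : ℕ) :
    IsLM3 (GrevGt3 ![2*r+1, 2*r+2, 2*r])
      (X 1 * X 2 - X 0^2 : MvPolynomial (Fin 3) K) (Finsupp.single 1 1 + Finsupp.single 2 1) := by
  refine ⟨by rw [g2_support]; simp, fun e he hne => ?_⟩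
  rw [g2_support] at he
  have he2 : e = Finsupp.single 0 2 := by
    rcases Finset.mem_insert.mp he with h | h
    · exact absurd h hne
    · exact Finset.mem_singleton.mp h
  subst he2
  refine Or.inr ⟨?_, 0, ?_, fin3_lt_elim 0 (by simp) (by simp)⟩
  · rw [wt3_eval, wt3_eval]; simp; ring
  · simp

lemma lm_g3 (r : ℕ) (hr : 2 ≤ r) :
    IsLM3 (GrevGt3 ![2*r+1, 2*r+2, 2*r])
      (X 2 ^ (r+1) - X 1^r : MvPolynomial (Fin 3) K) (Finsupp.single 2 (r+1)) := by
  refine ⟨by rw [g3_support]; simp, fun e he hne => ?_⟩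
  rw [g3_support] at he
  have he2 : e = Finsupp.single 1 r := by
    rcases Finset.mem_insert.mp he with h | h
    · exact absurd h hne
    · exact Finset.mem_singleton.mp h
  subst he2
  refine Or.inr ⟨?_, 1, ?_, fin3_lt_elim 1 (fun _ => by simp) (by simp)⟩
  · rw [wt3_eval, wt3_eval]; simp; ring
  · simp; omega

/- membership in the toric ideal -/

lemma mem_g1 (r : ℕ) :
    (aeval (fun i : Fin 3 => (Polynomial.X : Polynomial K) ^ ![2*r+1, 2*r+2, 2*r] i))
      (X 1 ^ (r+1) - X 0^2 * X 2^r : MvPolynomial (Fin 3) K) = 0 := by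
  simp only [map_sub, map_mul, map_pow, aeval_X]
  rw [show (![2*r+1, 2*r+2, 2*r] : Fin 3 → ℕ) 0 = 2*r+1 from rfl,
    show (![2*r+1, 2*r+2, 2*r] : Fin 3 → ℕ) 1 = 2*r+2 from rfl,
    show (![2*r+1, 2*r+2, 2*r] : Fin 3 → ℕ) 2 = 2*r from rfl,
    ← pow_mul, ← pow_mul, ← pow_mul, ← pow_add, sub_eq_zero]
  congr 1
  ring

lemma mem_g2 (r : ℕ) :
    (aeval (fun i : Fin 3 => (Polynomial.X : Polynomial K) ^ ![2*r+1, 2*r+2, 2*r] i))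
      (X 1 * X 2 - X 0^2 : MvPolynomial (Fin 3) K) = 0 := by
  simp only [map_sub, map_mul, map_pow, aeval_X]
  rw [show (![2*r+1, 2*r+2, 2*r] : Fin 3 → ℕ) 0 = 2*r+1 from rfl,
    show (![2*r+1, 2*r+2, 2*r] : Fin 3 → ℕ) 1 = 2*r+2 from rfl,
    show (![2*r+1, 2*r+2, 2*r] : Fin 3 → ℕ) 2 = 2*r from rfl,
    ← pow_mul, ← pow_add, sub_eq_zero]
  congr 1
  ring

lemma mem_g3 (r : ℕ) :
    (aeval (fun i : Fin 3 => (Polynomial.X : Polynomial K) ^ ![2*r+1, 2*r+2, 2*r] i))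
      (X 2 ^ (r+1) - X 1^r : MvPolynomial (Fin 3) K) = 0 := by
  simp only [map_sub, map_mul, map_pow, aeval_X]
  rw [show (![2*r+1, 2*r+2, 2*r] : Fin 3 → ℕ) 1 = 2*r+2 from rfl,
    show (![2*r+1, 2*r+2, 2*r] : Fin 3 → ℕ) 2 = 2*r from rfl,
    ← pow_mul, ← pow_mul, sub_eq_zero]
  congr 1
  ring

set_option maxHeartbeats 1000000 in
theorem stmt_16 (m0 : ℕ) (h5 : 5 ≤ m0) (hodd : Odd m0)
    -- the toric ideal P of the sequence (m_0, m_0+1, m_0−1)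
    (P : Ideal (MvPolynomial (Fin 3) K))
    (hP : P = RingHom.ker
        (MvPolynomial.aeval (fun i : Fin 3 => (Polynomial.X : Polynomial K) ^ ![m0, m0 + 1, m0 - 1] i) :
          MvPolynomial (Fin 3) K →ₐ[K] Polynomial K))
    -- G = {x_1^{(m_0+1)/2} − x_0²·x_2^{(m_0−1)/2}, x_1x_2 − x_0², x_2^{(m_0+1)/2} − x_1^{(m_0−1)/2}}
    (G : Set (MvPolynomial (Fin 3) K))
    (hG : G = {X 1 ^ ((m0 + 1) / 2) - X 0 ^ 2 * X 2 ^ ((m0 - 1) / 2),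
               X 1 * X 2 - X 0 ^ 2,
               X 2 ^ ((m0 + 1) / 2) - X 1 ^ ((m0 - 1) / 2)}) :
    -- G is a Gröbner basis of P
    IsGB3 (GrevGt3 ![m0, m0 + 1, m0 - 1]) P G ∧
    -- with leading monomials x_1^{(m_0+1)/2}, x_1x_2, x_2^{(m_0+1)/2} and all leading
    -- coefficients equal to 1
    (IsLM3 (GrevGt3 ![m0, m0 + 1, m0 - 1])
        (X 1 ^ ((m0 + 1) / 2) - X 0 ^ 2 * X 2 ^ ((m0 - 1) / 2) : MvPolynomial (Fin 3) K)
        (Finsupp.single 1 ((m0 + 1) / 2)) ∧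
      MvPolynomial.coeff (Finsupp.single 1 ((m0 + 1) / 2))
        (X 1 ^ ((m0 + 1) / 2) - X 0 ^ 2 * X 2 ^ ((m0 - 1) / 2) : MvPolynomial (Fin 3) K) = 1) ∧
    (IsLM3 (GrevGt3 ![m0, m0 + 1, m0 - 1]) (X 1 * X 2 - X 0 ^ 2 : MvPolynomial (Fin 3) K)
        (Finsupp.single 1 1 + Finsupp.single 2 1) ∧
      MvPolynomial.coeff (Finsupp.single 1 1 + Finsupp.single 2 1)
        (X 1 * X 2 - X 0 ^ 2 : MvPolynomial (Fin 3) K) = 1) ∧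
    (IsLM3 (GrevGt3 ![m0, m0 + 1, m0 - 1])
        (X 2 ^ ((m0 + 1) / 2) - X 1 ^ ((m0 - 1) / 2) : MvPolynomial (Fin 3) K)
        (Finsupp.single 2 ((m0 + 1) / 2)) ∧
      MvPolynomial.coeff (Finsupp.single 2 ((m0 + 1) / 2))
        (X 2 ^ ((m0 + 1) / 2) - X 1 ^ ((m0 - 1) / 2) : MvPolynomial (Fin 3) K) = 1) ∧
    -- G is reduced: no monomial appearing in an element of G is divisible by the leading
    -- monomial of a different element of G
    (∀ f ∈ G, ∀ d ∈ f.support, ∀ g ∈ G, g ≠ f →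
      ∀ dg, IsLM3 (GrevGt3 ![m0, m0 + 1, m0 - 1]) g dg → ¬ dg ≤ d) := by
  subst hP hG
  obtain ⟨r, rfl⟩ := hodd
  have hr : 2 ≤ r := by omega
  simp only [show 2*r+1+1 = 2*r+2 from by omega, show 2*r+1-1 = 2*r from by omega,
    show (2*r+1+1)/2 = r+1 from by omega, show (2*r+1-1)/2 = r from by omega,
    show (2*r+2)/2 = r+1 from by omega, show (2*r)/2 = r from by omega]
  have hcf1 : MvPolynomial.coeff (Finsupp.single 1 (r+1))
      (X 1 ^ (r+1) - X 0 ^ 2 * X 2 ^ r : MvPolynomial (Fin 3) K) = 1 := by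
    rw [g1_rep]; exact binom_coeff1 _ _ (d1_ne r)
  have hcf2 : MvPolynomial.coeff (Finsupp.single 1 1 + Finsupp.single 2 1)
      (X 1 * X 2 - X 0 ^ 2 : MvPolynomial (Fin 3) K) = 1 := by
    rw [g2_rep]; exact binom_coeff1 _ _ d2_ne
  have hcf3 : MvPolynomial.coeff (Finsupp.single 2 (r+1))
      (X 2 ^ (r+1) - X 1 ^ r : MvPolynomial (Fin 3) K) = 1 := by
    rw [g3_rep]; exact binom_coeff1 _ _ (d3_ne r)
  refine ⟨⟨?_, ?_, ?_⟩, ⟨lm_g1 r, hcf1⟩, ⟨lm_g2 r, hcf2⟩, ⟨lm_g3 r hr, hcf3⟩, ?_⟩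
  · -- G ⊆ P
    intro g hg
    simp only [Set.mem_insert_iff, Set.mem_singleton_iff] at hg
    rw [SetLike.mem_coe, RingHom.mem_ker]
    rcases hg with rfl | rfl | rfl
    · exact mem_g1 r
    · exact mem_g2 r
    · exact mem_g3 r
  · -- elements of G are nonzero
    intro g hg
    simp only [Set.mem_insert_iff, Set.mem_singleton_iff] at hg
    rcases hg with rfl | rfl | rfl
    · exact fun h => by rw [h] at hcf1; simp at hcf1
    · exact fun h => by rw [h] at hcf2; simp at hcf2
    · exact fun h => by rw [h] at hcf3; simp at hcf3
  · -- the Gröbner basis property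
    intro f hfP hf0
    obtain ⟨df, hdfmem, hdfmax⟩ :=
      exists_max3 ![2*r+1, 2*r+2, 2*r] f.support (Finsupp.support_nonempty_iff.mpr (by simpa using hf0))
    have hlmf : IsLM3 (GrevGt3 ![2*r+1, 2*r+2, 2*r]) f df := ⟨hdfmem, hdfmax⟩
    have hker : (aeval (fun i : Fin 3 => (Polynomial.X : Polynomial K) ^ ![2*r+1, 2*r+2, 2*r] i)) f = 0 :=
      RingHom.mem_ker.mp hfP
    obtain ⟨e, hemem, hene, hewt⟩ := toric_two_terms _ f hker df hdfmem
    have hnonstd : (1 ≤ df 1 ∧ 1 ≤ df 2) ∨ (r+1 ≤ df 1) ∨ (r+1 ≤ df 2) := by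
      by_contra hcon
      push_neg at hcon
      obtain ⟨hc3, hc1, hc2⟩ := hcon
      have h1 : df 1 ≤ r := by omega
      have h2 : df 2 ≤ r := by omega
      have h12 : df 1 = 0 ∨ df 2 = 0 := by
        rcases Nat.eq_zero_or_pos (df 1) with h | h
        · exact Or.inl h
        · have := hc3 h; exact Or.inr (by omega)
      exact grevgt3_asymm _ (hdfmax e hemem hene)
        (key_arith r hr df e h1 h2 h12 hewt.symm (Ne.symm hene))
    rcases hnonstd with ⟨h1, h2⟩ | h1 | h2
    · refine ⟨X 1 * X 2 - X 0 ^ 2, Set.mem_insert_iff.mpr (Or.inr (Set.mem_insert _ _)),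
        Finsupp.single 1 1 + Finsupp.single 2 1, df, lm_g2 r, hlmf, Finsupp.le_def.mpr fun i => ?_⟩
      fin_cases i
      · simp
      · simpa using h1
      · simpa using h2
    · refine ⟨X 1 ^ (r+1) - X 0 ^ 2 * X 2 ^ r, Set.mem_insert _ _,
        Finsupp.single 1 (r+1), df, lm_g1 r, hlmf, Finsupp.le_def.mpr fun i => ?_⟩
      fin_cases i
      · simp
      · simpa using h1
      · simp
    · refine ⟨X 2 ^ (r+1) - X 1 ^ r,
        Set.mem_insert_iff.mpr (Or.inr (Set.mem_insert_iff.mpr (Or.inr rfl))),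
        Finsupp.single 2 (r+1), df, lm_g3 r hr, hlmf, Finsupp.le_def.mpr fun i => ?_⟩
      fin_cases i
      · simp
      · simp
      · simpa using h2
  · -- G is reduced
    intro f hf d hd g hg hgf dg hdg
    simp only [Set.mem_insert_iff, Set.mem_singleton_iff] at hf hg
    rcases hf with rfl | rfl | rfl
    · rw [g1_support] at hd
      rcases hg with rfl | rfl | rfl
      · exact absurd rfl hgf
      · have hdg' := isLM3_unique hdg (lm_g2 r (K := K))
        subst hdg'
        intro hle
        rcases Finset.mem_insert.mp hd with rfl | hd2
        · have h := Finsupp.le_def.mp hle 2; simp at h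
        · rw [Finset.mem_singleton] at hd2; subst hd2
          have h := Finsupp.le_def.mp hle 1; simp at h
      · have hdg' := isLM3_unique hdg (lm_g3 r hr (K := K))
        subst hdg'
        intro hle
        rcases Finset.mem_insert.mp hd with rfl | hd2
        · have h := Finsupp.le_def.mp hle 2; simp at h
        · rw [Finset.mem_singleton] at hd2; subst hd2
          have h := Finsupp.le_def.mp hle 2; simp at h
    · rw [g2_support] at hd
      rcases hg with rfl | rfl | rfl
      · have hdg' := isLM3_unique hdg (lm_g1 r (K := K))
        subst hdg'
        intro hle
        rcases Finset.mem_insert.mp hd with rfl | hd2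
        · have h := Finsupp.le_def.mp hle 1; simp at h; omega
        · rw [Finset.mem_singleton] at hd2; subst hd2
          have h := Finsupp.le_def.mp hle 1; simp at h
      · exact absurd rfl hgf
      · have hdg' := isLM3_unique hdg (lm_g3 r hr (K := K))
        subst hdg'
        intro hle
        rcases Finset.mem_insert.mp hd with rfl | hd2
        · have h := Finsupp.le_def.mp hle 2; simp at h; omega
        · rw [Finset.mem_singleton] at hd2; subst hd2
          have h := Finsupp.le_def.mp hle 2; simp at h
    · rw [g3_support] at hd
      rcases hg with rfl | rfl | rfl
      · have hdg' := isLM3_unique hdg (lm_g1 r (K := K))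
        subst hdg'
        intro hle
        rcases Finset.mem_insert.mp hd with rfl | hd2
        · have h := Finsupp.le_def.mp hle 1; simp at h
        · rw [Finset.mem_singleton] at hd2; subst hd2
          have h := Finsupp.le_def.mp hle 1; simp at h
      · have hdg' := isLM3_unique hdg (lm_g2 r (K := K))
        subst hdg'
        intro hle
        rcases Finset.mem_insert.mp hd with rfl | hd2
        · have h := Finsupp.le_def.mp hle 1; simp at h
        · rw [Finset.mem_singleton] at hd2; subst hd2
          have h := Finsupp.le_def.mp hle 2; simp at h
      · exact absurd rfl hgf

end
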